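/- arXiv:1905.11838 — 3 statements merged into one kernel-verified Lean document; each statement's English description precedes it below -/
import Mathlib

section
/- Let C be a set of m ≥ 2 candidates and let α be a normalized score vector of length m. Then for any two distinct candidates x, y ∈ C there exists a profile P consisting of exactly m votes such that s_P(x) + 1 = s_P(y) − 1 = s_P(a) for every candidate a ∈ C ∖ {x, y}. -/
open Finset

/-- A vote over a candidate set `C` with `m` candidates: a ranking assigning each
candidate its position. -/
abbrev Vote (C : Type*) (m : ℕ) := C ≃ Fin m

/-- The score of candidate `x` in profile `P` under score vector `α`. -/
def score {C : Type*} {m : ℕ} (α : Fin m → ℝ) (P : Multiset (Vote C m)) (x : C) : ℝ :=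
  (P.map fun v => α (v x)).sum

/-- The scoring rule of `α`: the set of candidates with maximum score. -/
def scoringRule {C : Type*} {m : ℕ} (α : Fin m → ℝ) (P : Multiset (Vote C m)) : Set C :=
  {x | ∀ y, score α P y ≤ score α P x}

/-- `margin P x y`: number of votes preferring `x` to `y` minus those preferring `y` to `x`. -/
def margin {C : Type*} {m : ℕ} (P : Multiset (Vote C m)) (x y : C) : ℤ :=
  ((P.filter fun v => v x < v y).card : ℤ) - ((P.filter fun v => v y < v x).card : ℤ)

/-- `c` is the Condorcet winner of `P`. -/
def CondorcetWinner {C : Type*} {m : ℕ} (P : Multiset (Vote C m)) (c : C) : Prop :=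
  ∀ y, y ≠ c → 0 < margin P c y

/-- The Condorcet voting rule: `{c}` if a Condorcet winner `c` exists, all candidates otherwise. -/
def condorcetRule {C : Type*} {m : ℕ} (P : Multiset (Vote C m)) : Set C :=
  {x | CondorcetWinner P x ∨ ¬ ∃ c, CondorcetWinner P c}

/-- `α` is monotone nonincreasing (part of being a score vector). -/
def IsMonotoneScore {m : ℕ} (α : Fin m → ℝ) : Prop :=
  ∀ i j : Fin m, i ≤ j → α j ≤ α i

/-- `α` is normalized: some consecutive difference is `1` and all later entries are `0`. -/
def IsNormalized {m : ℕ} (α : Fin m → ℝ) : Prop :=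
  ∃ j : ℕ, ∃ hj : j + 1 < m, α ⟨j, Nat.lt_of_succ_lt hj⟩ - α ⟨j + 1, hj⟩ = 1 ∧
    ∀ ℓ : Fin m, j < (ℓ : ℕ) → α ℓ = 0

/-- `Q` is a profile `P_u^v`: it has `m` votes and
`s_Q(u) + 1 = s_Q(v) - 1 = s_Q(z)` for every `z ∉ {u, v}`. -/
def PfGood {C : Type*} {m : ℕ} (α : Fin m → ℝ) (Q : Multiset (Vote C m)) (u v : C) : Prop :=
  Multiset.card Q = m ∧ score α Q u + 1 = score α Q v - 1 ∧
    ∀ z : C, z ≠ u → z ≠ v → score α Q z = score α Q v - 1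

/-- The Optimal Defense instance with groups `G`, attacker resource `ka` and defender
resource `kd` is a Yes instance for voting rule `r`. -/
def DefenseYes {C : Type*} {m N : ℕ} (r : Multiset (Vote C m) → Set C)
    (G : Fin N → Multiset (Vote C m)) (ka kd : ℕ) : Prop :=
  ∃ I : Finset (Fin N), I.card ≤ kd ∧
    ∀ I' : Finset (Fin N), Disjoint I I' → I'.card ≤ ka →
      r (∑ i ∈ Finset.univ \ I', G i) = r (∑ i, G i)

/-- The Optimal Attack instance with groups `G`, attacker resource `ka` and defender
resource `kd` is a Yes instance for voting rule `r`. -/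
def AttackYes {C : Type*} {m N : ℕ} (r : Multiset (Vote C m) → Set C)
    (G : Fin N → Multiset (Vote C m)) (ka kd : ℕ) : Prop :=
  ∃ I : Finset (Fin N), I.card ≤ ka ∧
    ∀ I' : Finset (Fin N), I'.card ≤ kd →
      r (∑ i ∈ Finset.univ \ (I \ I'), G i) ≠ r (∑ i, G i)
/-- existence of the gadget profile `P_x^y` for any normalized score
vector of length `m ≥ 2`. -/
theorem stmt0 {C : Type} [Fintype C] [DecidableEq C] {m : ℕ} (hm : 2 ≤ m)
    (hcard : Fintype.card C = m) (α : Fin m → ℝ)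
    (hmono : IsMonotoneScore α) (hnorm : IsNormalized α)
    (x y : C) (hxy : x ≠ y) :
    ∃ P : Multiset (Vote C m), Multiset.card P = m ∧
      score α P x + 1 = score α P y - 1 ∧
      ∀ a : C, a ≠ x → a ≠ y → score α P a = score α P y - 1 := by
  haveI : NeZero m := ⟨by omega⟩
  obtain ⟨j, hj, hdiff, hzero⟩ := hnorm
  obtain ⟨e⟩ : Nonempty (C ≃ Fin m) := ⟨Fintype.equivFinOfCardEq hcard⟩
  have hv1 : (1 : Fin m).val = 1 := by
    rw [Fin.val_one']; exact Nat.mod_eq_of_lt hm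
  have hone : (1 : Fin m) ≠ 0 := by
    intro h
    have h' := congrArg Fin.val h
    rw [hv1, Fin.val_zero] at h'
    exact one_ne_zero h' 
  set τ : Fin m ≃ Fin m := Equiv.swap (e x) 0 with hτ
  have hτy : τ (e y) ≠ 0 := by
    have : τ (e x) = 0 := Equiv.swap_apply_left _ _
    intro h
    exact hxy (e.injective (τ.injective (h.trans this.symm))).symm
  set ρ : Fin m ≃ Fin m := Equiv.swap (τ (e y)) 1 with hρ
  set σ : C ≃ Fin m := e.trans (τ.trans ρ) with hσ
  have hσx : σ x = 0 := by
    have h1 : τ (e x) = 0 := Equiv.swap_apply_left _ _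
    have h2 : ρ 0 = 0 := Equiv.swap_apply_of_ne_of_ne (Ne.symm hτy) (Ne.symm hone)
    simp [hσ, Equiv.trans_apply, h1, h2]
  have hσy : σ y = 1 := by
    have : ρ (τ (e y)) = 1 := Equiv.swap_apply_left _ _
    simp [hσ, Equiv.trans_apply, this]
  set J : Fin m := ⟨j, Nat.lt_of_succ_lt hj⟩ with hJ
  set J1 : Fin m := ⟨j + 1, hj⟩ with hJ1def
  have hJadd : J + 1 = J1 := by
    apply Fin.ext
    rw [Fin.add_def, hv1]
    exact Nat.mod_eq_of_lt hj
  set w : Fin m → Vote C m := fun k => σ.trans (Equiv.addLeft k) with hw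
  set v : Fin m → Vote C m :=
    fun k => if k = J then (Equiv.swap x y).trans (w k) else w k with hv
  refine ⟨Multiset.map v Finset.univ.val, ?_, ?_⟩
  · simp
  set P : Multiset (Vote C m) := Multiset.map v Finset.univ.val with hP
  have hscore : ∀ a : C, score α P a = ∑ k : Fin m, α ((v k) a) := by
    intro a
    simp only [score, hP, Multiset.map_map, Function.comp]
    rfl
  have hS : ∀ a : C, ∑ k : Fin m, α ((w k) a) = ∑ i : Fin m, α i :=
    fun a => Fintype.sum_equiv (Equiv.addRight (σ a)) _ _ (fun k => rfl)
  have hsplit : ∀ a : C, score α P a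
      = (∑ i : Fin m, α i) - α ((w J) a) + α ((w J) (Equiv.swap x y a)) := by
    intro a
    rw [hscore, ← hS a]
    rw [← Finset.sum_erase_add _ _ (Finset.mem_univ J),
        ← Finset.sum_erase_add _ (fun k => α ((w k) a)) (Finset.mem_univ J)]
    have hc : ∀ k ∈ Finset.univ.erase J, α ((v k) a) = α ((w k) a) := by
      intro k hk
      simp [hv, (Finset.mem_erase.mp hk).1]
    rw [Finset.sum_congr rfl hc]
    simp only [hv, if_pos rfl, Equiv.trans_apply]
    ring
  have hwJx : (w J) x = J := by simp [hw, hσx]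
  have hwJy : (w J) y = J1 := by
    simp only [hw, Equiv.trans_apply, Equiv.coe_addLeft, hσy]
    exact hJadd
  have hsx : score α P x = (∑ i : Fin m, α i) - α J + α J1 := by
    rw [hsplit x, Equiv.swap_apply_left, hwJx, hwJy]
  have hsy : score α P y = (∑ i : Fin m, α i) - α J1 + α J := by
    rw [hsplit y, Equiv.swap_apply_right, hwJy, hwJx]
  have hdiff' : α J - α J1 = 1 := hdiff
  constructor
  · rw [hsx, hsy]; linarith
  · intro a hax hay
    have : Equiv.swap x y a = a := Equiv.swap_apply_of_ne_of_ne hax hay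
    rw [hsplit a, this, hsy]
    ring_nf
    linarith
end

section
/- Let C be a finite set of candidates and let f : C × C → ℤ be a function such that f(a,b) = −f(b,a) for all distinct a, b ∈ C and such that f(a,b) + f(c,d) is even for all distinct pairs a ≠ b and c ≠ d (equivalently, all the values f(a,b) for a ≠ b have the same parity). Then there exists a profile P over C such that for all distinct a, b ∈ C the candidate a defeats b in P with margin exactly f(a,b), i.e., D_P(a,b) = f(a,b) for all a ≠ b. -/
open Finset

def rho (m : ℕ) [NeZero m] : Equiv.Perm (Fin m) :=
  Fin.revPerm.trans (Equiv.swap ⟨m - 2, by have := NeZero.ne m; omega⟩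
    ⟨m - 1, by have := NeZero.ne m; omega⟩)

lemma rho_val {m : ℕ} [NeZero m] (h2 : 2 ≤ m) (i : Fin m) :
    ((rho m i : Fin m) : ℕ) = if (i : ℕ) = 0 then m - 2 else if (i : ℕ) = 1 then m - 1
      else m - 1 - i := by
  have hi := i.isLt
  simp only [rho, Equiv.trans_apply, Fin.revPerm_apply, Equiv.swap_apply_def, Fin.rev]
  split_ifs <;> simp only [Fin.ext_iff, Fin.val_mk] at * <;> omega

lemma rho_lt {m : ℕ} [NeZero m] (h2 : 2 ≤ m) {i j : Fin m}
    (h : ¬((i : ℕ) = 0 ∧ (j : ℕ) = 1)) (h' : ¬((i : ℕ) = 1 ∧ (j : ℕ) = 0)) :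
    rho m j < rho m i ↔ i < j := by
  have hi := i.isLt; have hj := j.isLt
  rw [Fin.lt_def, Fin.lt_def, rho_val h2 i, rho_val h2 j]
  split_ifs <;> omega

section
variable {C : Type*} {m : ℕ}

lemma margin_zero (x y : C) : margin (0 : Multiset (Vote C m)) x y = 0 := by simp [margin]

lemma margin_skew (P : Multiset (Vote C m)) (x y : C) : margin P y x = - margin P x y := by
  simp [margin]

lemma margin_add (P Q : Multiset (Vote C m)) (x y : C) :
    margin (P + Q) x y = margin P x y + margin Q x y := by
  simp [margin, Multiset.filter_add]; ring

lemma margin_sum {ι : Type*} (s : Finset ι) (Q : ι → Multiset (Vote C m)) (x y : C) :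
    margin (∑ i ∈ s, Q i) x y = ∑ i ∈ s, margin (Q i) x y := by
  classical
  induction s using Finset.induction with
  | empty => simp [margin_zero]
  | insert _ _ h ih => rw [Finset.sum_insert h, Finset.sum_insert h, margin_add, ih]

lemma margin_nsmul (n : ℕ) (P : Multiset (Vote C m)) (x y : C) :
    margin (n • P) x y = n * margin P x y := by
  induction n with
  | zero => simp [margin_zero]
  | succ k ih => rw [succ_nsmul, margin_add, ih]; push_cast; ring

lemma margin_singleton (v : Vote C m) {x y : C} (hxy : x ≠ y) :
    margin ({v} : Multiset (Vote C m)) x y = if v x < v y then 1 else -1 := by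
  have hne : v x ≠ v y := fun h => hxy (v.injective h)
  rcases lt_or_gt_of_ne hne with h | h
  · simp [margin, Multiset.filter_singleton, h, asymm h]
  · simp [margin, Multiset.filter_singleton, h, asymm h, not_lt_of_gt h]

lemma margin_pair_vote (v w : Vote C m) {x y : C} (hxy : x ≠ y) :
    margin ({v, w} : Multiset (Vote C m)) x y =
      (if v x < v y then 1 else -1) + (if w x < w y then 1 else -1) := by
  have : ({v, w} : Multiset (Vote C m)) = {v} + {w} := rfl
  rw [this, margin_add, margin_singleton v hxy, margin_singleton w hxy]

variable [NeZero m]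

def sigma (e : C ≃ Fin m) (a b : C) : Vote C m :=
  e.trans ((Equiv.swap (e a) ⟨0, by have := NeZero.ne m; omega⟩).trans
    (Equiv.swap ((Equiv.swap (e a) ⟨0, by have := NeZero.ne m; omega⟩) (e b))
      ⟨1 % m, Nat.mod_lt _ (by have := NeZero.ne m; omega)⟩))

lemma sigma_spec (h2 : 2 ≤ m) (e : C ≃ Fin m) {a b : C} (hab : a ≠ b) :
    sigma e a b a = ⟨0, by omega⟩ ∧ sigma e a b b = ⟨1 % m, Nat.mod_lt _ (by omega)⟩ := by
  have hone : (1 : ℕ) % m = 1 := Nat.mod_eq_of_lt (by omega)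
  have hab' : e a ≠ e b := fun h => hab (e.injective h)
  set z : Fin m := ⟨0, by omega⟩
  set o : Fin m := ⟨1 % m, Nat.mod_lt _ (by omega)⟩
  have hzo : z ≠ o := by simp [z, o, Fin.ext_iff, hone]
  set c := (Equiv.swap (e a) z) (e b) with hc
  have hcz : c ≠ z := by
    rw [hc]
    rcases eq_or_ne (e b) (e a) with h | h
    · exact absurd h hab'.symm
    · rcases eq_or_ne (e b) z with h0 | h0
      · rw [h0, Equiv.swap_apply_right]
        intro h'; exact hab' (by rw [h', ← h0])
      · rw [Equiv.swap_apply_of_ne_of_ne h h0]; exact h0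
  constructor
  · simp only [sigma, Equiv.trans_apply, Equiv.swap_apply_left]
    exact Equiv.swap_apply_of_ne_of_ne (Ne.symm hcz) hzo
  · simp only [sigma, Equiv.trans_apply, ← hc]
    exact Equiv.swap_apply_left c o

def pairPf (e : C ≃ Fin m) (a b : C) : Multiset (Vote C m) :=
  {sigma e a b, (sigma e a b).trans (rho m)}

lemma margin_pairPf [DecidableEq C] (h2 : 2 ≤ m) (e : C ≃ Fin m) {a b x y : C}
    (hab : a ≠ b) (hxy : x ≠ y) :
    margin (pairPf e a b) x y =
      if x = a ∧ y = b then 2 else if x = b ∧ y = a then -2 else 0 := by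
  have hone : (1 : ℕ) % m = 1 := Nat.mod_eq_of_lt (by omega)
  obtain ⟨ha, hb⟩ := sigma_spec h2 e hab
  rw [pairPf, margin_pair_vote _ _ hxy]
  rw [Equiv.trans_apply, Equiv.trans_apply]
  set σ := sigma e a b with hσ
  have hσx : ∀ t : C, ((σ t : Fin m) : ℕ) = 0 ↔ t = a := by
    intro t
    constructor
    · intro h
      apply σ.injective
      rw [ha]; exact Fin.ext h
    · rintro rfl; rw [ha]
  have hσy : ∀ t : C, ((σ t : Fin m) : ℕ) = 1 ↔ t = b := by
    intro t
    constructor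
    · intro h
      apply σ.injective
      rw [hb]; exact Fin.ext (by simpa [hone] using h)
    · rintro rfl; rw [hb]; simpa using hone
  have hσne : σ x ≠ σ y := fun h => hxy (σ.injective h)
  by_cases h1 : x = a ∧ y = b
  · obtain ⟨rfl, rfl⟩ := h1
    simp only [ha, hb]
    have hlt : (⟨0, by omega⟩ : Fin m) < ⟨1 % m, Nat.mod_lt _ (by omega)⟩ := by
      rw [Fin.lt_def]; simp [hone]
    have hlt2 : rho m ⟨0, by omega⟩ < rho m ⟨1 % m, Nat.mod_lt _ (by omega)⟩ := by
      rw [Fin.lt_def, rho_val h2, rho_val h2]; simp [hone]; omega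
    have e0 : (⟨0, by omega⟩ : Fin m) = 0 := Fin.ext (by simp)
    rw [e0] at hlt hlt2
    simp [hlt, hlt2]
  · by_cases h1' : x = b ∧ y = a
    · obtain ⟨rfl, rfl⟩ := h1'
      simp only [ha, hb]
      have hlt : ¬ ((⟨1 % m, Nat.mod_lt _ (by omega)⟩ : Fin m) < ⟨0, by omega⟩) := by
        rw [Fin.lt_def]; simp
      have hlt2 : ¬ (rho m ⟨1 % m, Nat.mod_lt _ (by omega)⟩ < rho m ⟨0, by omega⟩) := by
        rw [Fin.lt_def, rho_val h2, rho_val h2]; simp [hone]; omega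
      have e0 : (⟨0, by omega⟩ : Fin m) = 0 := Fin.ext (by simp)
      rw [e0] at hlt hlt2
      simp [hlt, hlt2, hxy]
    · have hc1 : ¬(((σ x : Fin m) : ℕ) = 0 ∧ ((σ y : Fin m) : ℕ) = 1) := by
        rw [hσx, hσy]; exact h1
      have hc2 : ¬(((σ x : Fin m) : ℕ) = 1 ∧ ((σ y : Fin m) : ℕ) = 0) := by
        rw [hσy, hσx]; exact fun ⟨u, v⟩ => h1' ⟨u, v⟩
      have hc1' : ¬(((σ y : Fin m) : ℕ) = 0 ∧ ((σ x : Fin m) : ℕ) = 1) := by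
        rw [hσx, hσy]; exact fun ⟨u, v⟩ => h1' ⟨v, u⟩
      have hc2' : ¬(((σ y : Fin m) : ℕ) = 1 ∧ ((σ x : Fin m) : ℕ) = 0) := by
        rw [hσy, hσx]; exact fun ⟨u, v⟩ => h1 ⟨v, u⟩
      have i1 := rho_lt h2 hc1 hc2
      have i2 := rho_lt h2 hc1' hc2'
      rcases lt_or_gt_of_ne hσne with h | h
      · rw [if_pos h, if_neg (by rw [i2]; exact asymm h)]
        simp [hxy, h1, h1']
      · rw [if_neg (asymm h), if_pos (by rw [i2]; exact h)]
        simp [hxy, h1, h1']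

end

/-- McGarvey: any skew-symmetric integer function with uniform parity
is realized as the margin function of some profile. -/
theorem stmt1 {C : Type} [Fintype C] [DecidableEq C] (f : C → C → ℤ)
    (hanti : ∀ a b : C, a ≠ b → f a b = - f b a)
    (hpar : ∀ a b c d : C, a ≠ b → c ≠ d → Even (f a b + f c d)) :
    ∃ P : Multiset (Vote C (Fintype.card C)),
      ∀ a b : C, a ≠ b → margin P a b = f a b := by
  classical
  by_cases hex : ∃ a b : C, a ≠ b
  case neg => exact ⟨0, fun a b hab => absurd ⟨a, b, hab⟩ hex⟩
  obtain ⟨a0, b0, hab0⟩ := hex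
  set m := Fintype.card C with hm
  have h2 : 2 ≤ m := Fintype.one_lt_card_iff.mpr ⟨a0, b0, hab0⟩
  haveI : NeZero m := ⟨by omega⟩
  set e : C ≃ Fin m := Fintype.equivFin C with he
  set P0 : Multiset (Vote C m) := if Odd (f a0 b0) then {e} else 0 with hP0
  set g : C → C → ℤ := fun a b => f a b - margin P0 a b with hg
  have hgeven : ∀ a b : C, a ≠ b → Even (g a b) := by
    intro a b hab
    obtain ⟨s, hs⟩ := hpar a b a0 b0 hab hab0
    by_cases hodd : Odd (f a0 b0)
    · obtain ⟨r, hr⟩ := hodd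
      have hP0' : P0 = {e} := if_pos (by exact ⟨r, hr⟩)
      have := margin_singleton e hab
      simp only [hg, hP0', this]
      split_ifs
      · exact ⟨s - r - 1, by omega⟩
      · exact ⟨s - r, by omega⟩
    · rw [Int.not_odd_iff_even] at hodd
      obtain ⟨r, hr⟩ := hodd
      have hP0' : P0 = 0 := if_neg (by rw [Int.not_odd_iff_even]; exact ⟨r, hr⟩)
      simp only [hg, hP0', margin_zero]
      exact ⟨s - r, by omega⟩
  have hgskew : ∀ a b : C, a ≠ b → g b a = - g a b := by
    intro a b hab
    simp only [hg, hanti a b hab, margin_skew P0 a b]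
    ring
  set n : C × C → ℕ := fun p => if p.1 ≠ p.2 then (g p.1 p.2).toNat / 2 else 0 with hn
  refine ⟨P0 + ∑ p : C × C, n p • pairPf e p.1 p.2, fun x y hxy => ?_⟩
  rw [margin_add, margin_sum]
  have hterm : ∀ p : C × C, margin (n p • pairPf e p.1 p.2) x y =
      (if p = (x, y) then (n (x, y) : ℤ) * 2 else 0) +
      (if p = (y, x) then (n (y, x) : ℤ) * (-2) else 0) := by
    intro p
    rw [margin_nsmul]
    by_cases hp : p.1 = p.2
    · have hn0 : n p = 0 := by simp [hn, hp]
      have h1 : p ≠ (x, y) := fun h => hxy (by rw [h] at hp; exact hp)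
      have h2' : p ≠ (y, x) := fun h => hxy (by rw [h] at hp; exact hp.symm)
      simp [hn0, h1, h2']
    · rw [margin_pairPf h2 e hp hxy]
      by_cases hxy1 : p = (x, y)
      · subst hxy1
        simp [hxy, Ne.symm hxy]
      · by_cases hxy2 : p = (y, x)
        · subst hxy2
          simp [hxy, Ne.symm hxy]
        · have c1 : ¬(x = p.1 ∧ y = p.2) := by
            rintro ⟨rfl, rfl⟩; exact hxy1 rfl
          have c2 : ¬(x = p.2 ∧ y = p.1) := by
            rintro ⟨rfl, rfl⟩; exact hxy2 rfl
          simp [c1, c2, hxy1, hxy2]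
  rw [Finset.sum_congr rfl (fun p _ => hterm p), Finset.sum_add_distrib]
  rw [Finset.sum_ite_eq' Finset.univ (x, y), Finset.sum_ite_eq' Finset.univ (y, x)]
  simp only [Finset.mem_univ, if_pos]
  have hnxy : n (x, y) = (g x y).toNat / 2 := by simp [hn, hxy]
  have hnyx : n (y, x) = ((- g x y).toNat) / 2 := by
    simp [hn, Ne.symm hxy, hgskew x y hxy]
  obtain ⟨r, hr⟩ := hgeven x y hxy
  have hgxy : g x y = f x y - margin P0 x y := rfl
  rw [hnxy, hnyx]
  omega
end

section
/- Fix the candidate set C = {a,b,c} and a normalized score vector α of length 3, and for each ordered pair (u,v) of distinct candidates fix a profile P_u^v as in the context. Let w_1,…,w_n be positive integers each divisible by 8, let M be a positive integer divisible by 8, let k be a positive integer with k ≤ n, 2k < n and M < ∑_{i=1}^n w_i, and let M' be an integer divisible by 8 with M' > ∑_{i=1}^n w_i. Define voter groups: for each i ∈ [n], G_i consists of w_i copies of P_a^c and M' − w_i copies of P_b^c; and Ĝ consists of (kM'+M)/2 − 3 copies of P_c^a, (kM'−M)/2 − 1 copies of P_c^b, and (kM'−M)/2 − 1 copies of P_a^b.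 Then the Optimal Defense instance (C, {G_1,…,G_n, Ĝ}, k_a = n+1, k_d = k) for the scoring rule of α is a Yes instance if and only if there exists an index set I ⊆ [n] with |I| = k and ∑_{i∈I} w_i = M. -/
open Finset

lemma score_add' {C : Type*} {m : ℕ} (α : Fin m → ℝ) (P Q : Multiset (Vote C m)) (x : C) :
    score α (P + Q) x = score α P x + score α Q x := by simp [score]

lemma score_nsmul' {C : Type*} {m : ℕ} (α : Fin m → ℝ) (t : ℕ) (P : Multiset (Vote C m)) (x : C) :
    score α (t • P) x = t * score α P x := by
  induction t with
  | zero => simp [score]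
  | succ s ih => rw [succ_nsmul, score_add', ih]; push_cast; ring

lemma score_sum' {C : Type*} {m : ℕ} (α : Fin m → ℝ) {ι : Type*} (S : Finset ι)
    (G : ι → Multiset (Vote C m)) (x : C) :
    score α (∑ i ∈ S, G i) x = ∑ i ∈ S, score α (G i) x := by
  classical
  induction S using Finset.cons_induction with
  | empty => simp [score]
  | cons i S hi ih => rw [Finset.sum_cons, score_add', ih, Finset.sum_cons]

lemma univ_triple' {C : Type} [Fintype C] [DecidableEq C] (hC : Fintype.card C = 3)
    {u v z : C} (huv : u ≠ v) (huz : u ≠ z) (hvz : v ≠ z) :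
    (Finset.univ : Finset C) = {u, v, z} := by
  symm
  apply Finset.eq_univ_of_card
  rw [hC, Finset.card_insert_of_notMem (by simp [huv, huz]),
    Finset.card_insert_of_notMem (by simp [hvz]), Finset.card_singleton]

lemma score_triple' {C : Type} [Fintype C] [DecidableEq C] (hC : Fintype.card C = 3)
    {u v z : C} (huv : u ≠ v) (huz : u ≠ z) (hvz : v ≠ z)
    (α : Fin 3 → ℝ) (P : Multiset (Vote C 3)) :
    score α P u + score α P v + score α P z = (Multiset.card P : ℝ) * (∑ i, α i) := by
  unfold score
  rw [← Multiset.sum_map_add, ← Multiset.sum_map_add]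
  have h : ∀ x : Vote C 3, x ∈ P → (fun v' => α (v' u) + α (v' v) + α (v' z)) x
      = (fun _ => ∑ i, α i) x := by
    intro e _
    have h1 : ∑ x : C, α (e x) = ∑ i, α i := Fintype.sum_equiv e _ _ (fun x => rfl)
    rw [← h1, univ_triple' hC huv huz hvz,
      Finset.sum_insert (by simp [huv, huz]), Finset.sum_insert (by simp [hvz]),
      Finset.sum_singleton]
    ring
  rw [Multiset.map_congr rfl h, Multiset.map_const', Multiset.sum_replicate, nsmul_eq_mul]

lemma scorePf' {C : Type} [Fintype C] [DecidableEq C] (hC : Fintype.card C = 3)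
    {u v z : C} (huv : u ≠ v) (huz : u ≠ z) (hvz : v ≠ z)
    (α : Fin 3 → ℝ) (Q : Multiset (Vote C 3)) (hQ : PfGood α Q u v) :
    score α Q u = (∑ i, α i) - 1 ∧ score α Q v = (∑ i, α i) + 1 ∧
      score α Q z = ∑ i, α i := by
  obtain ⟨hcard, h1, h2⟩ := hQ
  have hz := h2 z (Ne.symm huz) (Ne.symm hvz)
  have ht := score_triple' hC huv huz hvz α Q
  rw [hcard] at ht
  norm_num at ht
  refine ⟨by linarith, by linarith, by linarith⟩

lemma rule_singleton' {C : Type*} {m : ℕ} (α : Fin m → ℝ) (P : Multiset (Vote C m))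
    (a b c : C) (hac : a ≠ c) (hbc : b ≠ c) (hy : ∀ y : C, y = a ∨ y = b ∨ y = c) :
    scoringRule α P = {c} ↔
      0 < score α P c - score α P a ∧ 0 < score α P c - score α P b := by
  constructor
  · intro h
    have hc : ∀ y, score α P y ≤ score α P c := by
      have : c ∈ scoringRule α P := by rw [h]; exact rfl
      exact this
    have ha : ¬ ∀ y, score α P y ≤ score α P a := by
      have : a ∉ scoringRule α P := by rw [h]; simp [hac]
      exact this
    have hb : ¬ ∀ y, score α P y ≤ score α P b := by
      have : b ∉ scoringRule α P := by rw [h]; simp [hbc]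
      exact this
    push_neg at ha hb
    obtain ⟨y1, hy1⟩ := ha
    obtain ⟨y2, hy2⟩ := hb
    constructor
    · rcases hy y1 with h1 | h1 | h1 <;> rw [h1] at hy1 <;> linarith [hc b]
    · rcases hy y2 with h1 | h1 | h1 <;> rw [h1] at hy2 <;> linarith [hc a]
  · rintro ⟨h1, h2⟩
    ext x
    simp only [scoringRule, Set.mem_setOf_eq, Set.mem_singleton_iff]
    constructor
    · intro hx
      rcases hy x with rfl | rfl | rfl
      · exact absurd (hx c) (by linarith)
      · exact absurd (hx c) (by linarith)
      · rfl
    · rintro rfl y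
      rcases hy y with rfl | rfl | rfl
      · linarith
      · linarith
      · exact le_refl _

lemma erase_last_eq' {n : ℕ} (S : Finset (Fin (n+1))) :
    S.erase (Fin.last n) =
      (Finset.univ.filter (fun j : Fin n => j.castSucc ∈ S)).image Fin.castSucc := by
  ext i
  simp only [Finset.mem_erase, Finset.mem_image, Finset.mem_filter, Finset.mem_univ, true_and]
  constructor
  · rintro ⟨hne, hmem⟩
    obtain ⟨j, rfl⟩ := Fin.exists_castSucc_eq.2 hne
    exact ⟨j, hmem, rfl⟩
  · rintro ⟨j, hj, rfl⟩
    exact ⟨Fin.castSucc_lt_last j |>.ne, hj⟩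

lemma sum_snoc_finset' {n : ℕ} {β : Type*} [AddCommGroup β] (S : Finset (Fin (n+1)))
    (g : Fin (n+1) → β) :
    ∑ i ∈ S, g i = (∑ j ∈ Finset.univ.filter (fun j : Fin n => j.castSucc ∈ S),
        g j.castSucc) + (if Fin.last n ∈ S then g (Fin.last n) else 0) := by
  have himg : ∑ i ∈ S.erase (Fin.last n), g i
      = ∑ j ∈ Finset.univ.filter (fun j : Fin n => j.castSucc ∈ S), g j.castSucc := by
    rw [erase_last_eq' S, Finset.sum_image (fun x _ y _ h => Fin.castSucc_injective n h)]
  by_cases hl : Fin.last n ∈ S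
  · rw [if_pos hl, ← Finset.sum_erase_add S g hl, himg]
  · rw [if_neg hl, ← himg, Finset.erase_eq_of_notMem hl, add_zero]

/- ### main theorem -/


set_option maxHeartbeats 1000000 in
/-- the k-Sum reduction instance for Optimal Defense under a scoring
rule with 3 candidates. -/
theorem stmt2 {C : Type} [Fintype C] [DecidableEq C] (hC : Fintype.card C = 3)
    (a b c : C) (hab : a ≠ b) (hac : a ≠ c) (hbc : b ≠ c)
    (α : Fin 3 → ℝ) (hmono : IsMonotoneScore α) (hnorm : IsNormalized α)
    (Pf : C → C → Multiset (Vote C 3))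
    (hPf : ∀ u v : C, u ≠ v → PfGood α (Pf u v) u v)
    (n : ℕ) (w : Fin n → ℕ) (hwpos : ∀ i, 0 < w i) (hw8 : ∀ i, 8 ∣ w i)
    (M k M' : ℕ) (hMpos : 0 < M) (hM8 : 8 ∣ M)
    (hkpos : 0 < k) (hkn : k ≤ n) (h2k : 2 * k < n)
    (hMsum : M < ∑ i, w i) (hM'8 : 8 ∣ M') (hM'big : (∑ i, w i) < M') :
    DefenseYes (scoringRule α)
      (Fin.snoc (fun i : Fin n => w i • Pf a c + (M' - w i) • Pf b c)
        (((k * M' + M) / 2 - 3) • Pf c a + ((k * M' - M) / 2 - 1) • Pf c b +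
          ((k * M' - M) / 2 - 1) • Pf a b))
      (n + 1) k ↔
    ∃ I : Finset (Fin n), I.card = k ∧ ∑ i ∈ I, w i = M := by
  classical
  have hy : ∀ y : C, y = a ∨ y = b ∨ y = c := by
    intro y
    have hm := Finset.mem_univ y
    rw [univ_triple' hC hab hac hbc] at hm
    simpa using hm
  set σ : ℝ := ∑ i, α i with hσ
  -- scores of the five basic profiles
  obtain ⟨pac_a, pac_c, pac_b⟩ := scorePf' hC hac hab (Ne.symm hbc) α _ (hPf a c hac)
  obtain ⟨pbc_b, pbc_c, pbc_a⟩ := scorePf' hC hbc (Ne.symm hab) (Ne.symm hac) α _ (hPf b c hbc)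
  obtain ⟨pca_c, pca_a, pca_b⟩ := scorePf' hC (Ne.symm hac) (Ne.symm hbc) hab α _
    (hPf c a (Ne.symm hac))
  obtain ⟨pcb_c, pcb_b, pcb_a⟩ := scorePf' hC (Ne.symm hbc) (Ne.symm hac) (Ne.symm hab) α _
    (hPf c b (Ne.symm hbc))
  obtain ⟨pab_a, pab_b, pab_c⟩ := scorePf' hC hab hac hbc α _ (hPf a b hab)
  -- numeric facts
  set W := ∑ i, w i with hWdef
  have hW8 : 8 ∣ W := Finset.dvd_sum (fun i _ => hw8 i)
  have hM8' : 8 ≤ M := Nat.le_of_dvd hMpos hM8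
  have hMW : M + 8 ≤ W := by omega
  have hWM' : W + 8 ≤ M' := by omega
  set km := k * M' with hkmdef
  have hkmge : M' ≤ km := Nat.le_mul_of_pos_left M' hkpos
  have hkm8 : 8 ∣ km := hM'8.mul_left k
  set K1 := (km + M) / 2 - 3 with hK1def
  set K2 := (km - M) / 2 - 1 with hK2def
  have hK1 : 2 * K1 + 6 = km + M := by omega
  have hK2 : 2 * K2 + 2 + M = km := by omega
  have hK1Z : 2 * (K1 : ℤ) + 6 = (km : ℤ) + M := by exact_mod_cast hK1
  have hK2Z : 2 * (K2 : ℤ) + 2 + M = (km : ℤ) := by exact_mod_cast hK2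
  have hkmZ : (km : ℤ) = (k : ℤ) * M' := by exact_mod_cast hkmdef
  have hkmgeZ : (M' : ℤ) ≤ km := by exact_mod_cast hkmge
  set G : Fin (n + 1) → Multiset (Vote C 3) :=
    Fin.snoc (fun i : Fin n => w i • Pf a c + (M' - w i) • Pf b c)
      (K1 • Pf c a + K2 • Pf c b + K2 • Pf a b) with hG
  have hwle : ∀ j : Fin n, w j ≤ M' := by
    intro j
    have : w j ≤ W := Finset.single_le_sum (fun i _ => Nat.zero_le _) (Finset.mem_univ j)
    omega
  -- per-group scores
  have hGlow : ∀ j : Fin n, G j.castSucc = w j • Pf a c + (M' - w j) • Pf b c := by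
    intro j; rw [hG]; exact Fin.snoc_castSucc _ _ _
  have hGlast : G (Fin.last n) = K1 • Pf c a + K2 • Pf c b + K2 • Pf a b := by
    rw [hG]; exact Fin.snoc_last _ _
  have hga : ∀ j : Fin n, score α (G j.castSucc) a = M' * σ - w j := by
    intro j
    rw [hGlow j, score_add', score_nsmul', score_nsmul', pac_a, pbc_a,
      Nat.cast_sub (hwle j)]
    ring
  have hgb : ∀ j : Fin n, score α (G j.castSucc) b = M' * σ - M' + w j := by
    intro j
    rw [hGlow j, score_add', score_nsmul', score_nsmul', pac_b, pbc_b,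
      Nat.cast_sub (hwle j)]
    ring
  have hgc : ∀ j : Fin n, score α (G j.castSucc) c = M' * σ + M' := by
    intro j
    rw [hGlow j, score_add', score_nsmul', score_nsmul', pac_c, pbc_c,
      Nat.cast_sub (hwle j)]
    ring
  have hla : score α (G (Fin.last n)) a = (K1 + 2 * K2) * σ + K1 - K2 := by
    rw [hGlast, score_add', score_add', score_nsmul', score_nsmul', score_nsmul',
      pca_a, pcb_a, pab_a]
    push_cast; ring
  have hlb : score α (G (Fin.last n)) b = (K1 + 2 * K2) * σ + 2 * K2 := by
    rw [hGlast, score_add', score_add', score_nsmul', score_nsmul', score_nsmul',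
      pca_b, pcb_b, pab_b]
    push_cast; ring
  have hlc : score α (G (Fin.last n)) c = (K1 + 2 * K2) * σ - K1 - K2 := by
    rw [hGlast, score_add', score_add', score_nsmul', score_nsmul', score_nsmul',
      pca_c, pcb_c, pab_c]
    push_cast; ring
  -- the low-index part of a coalition
  set T : Finset (Fin (n + 1)) → Finset (Fin n) :=
    fun S => Finset.univ.filter (fun j : Fin n => j.castSucc ∈ S) with hT
  -- score differences
  have hdca : ∀ S : Finset (Fin (n + 1)),
      score α (∑ i ∈ S, G i) c - score α (∑ i ∈ S, G i) a
        = ((T S).card : ℝ) * M' + (∑ j ∈ T S, (w j : ℝ))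
          + (if Fin.last n ∈ S then -2 * (K1 : ℝ) else 0) := by
    intro S
    rw [score_sum', score_sum', ← Finset.sum_sub_distrib,
      sum_snoc_finset' S (fun i => score α (G i) c - score α (G i) a)]
    have hterm : ∀ j ∈ T S,
        score α (G j.castSucc) c - score α (G j.castSucc) a = (M' : ℝ) + w j := by
      intro j _; rw [hgc j, hga j]; ring
    rw [Finset.sum_congr rfl hterm, Finset.sum_add_distrib, Finset.sum_const, nsmul_eq_mul]
    by_cases hl : Fin.last n ∈ S
    · rw [if_pos hl, if_pos hl, hlc, hla]; ring
    · rw [if_neg hl, if_neg hl]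
      all_goals ring
  have hdcb : ∀ S : Finset (Fin (n + 1)),
      score α (∑ i ∈ S, G i) c - score α (∑ i ∈ S, G i) b
        = 2 * ((T S).card : ℝ) * M' - (∑ j ∈ T S, (w j : ℝ))
          + (if Fin.last n ∈ S then -(K1 : ℝ) - 3 * K2 else 0) := by
    intro S
    rw [score_sum', score_sum', ← Finset.sum_sub_distrib,
      sum_snoc_finset' S (fun i => score α (G i) c - score α (G i) b)]
    have hterm : ∀ j ∈ T S,
        score α (G j.castSucc) c - score α (G j.castSucc) b = 2 * (M' : ℝ) - w j := by
      intro j _; rw [hgc j, hgb j]; ring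
    rw [Finset.sum_congr rfl hterm, Finset.sum_sub_distrib, Finset.sum_const, nsmul_eq_mul]
    by_cases hl : Fin.last n ∈ S
    · rw [if_pos hl, if_pos hl, hlc, hlb]; ring
    · rw [if_neg hl, if_neg hl]
      all_goals ring
  -- winner characterization, in ℤ
  have hwinZ : ∀ S : Finset (Fin (n + 1)),
      (scoringRule α (∑ i ∈ S, G i) = {c} ↔
        ((0 : ℤ) < ((T S).card : ℤ) * M' + (∑ j ∈ T S, w j : ℕ)
            + (if Fin.last n ∈ S then -2 * (K1 : ℤ) else 0)
          ∧ (0 : ℤ) < 2 * ((T S).card : ℤ) * M' - (∑ j ∈ T S, w j : ℕ)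
            + (if Fin.last n ∈ S then -(K1 : ℤ) - 3 * K2 else 0))) := by
    intro S
    rw [rule_singleton' α _ a b c hac hbc hy, hdca S, hdcb S]
    have e1 : ((T S).card : ℝ) * M' + (∑ j ∈ T S, (w j : ℝ))
          + (if Fin.last n ∈ S then -2 * (K1 : ℝ) else 0)
        = ((((T S).card : ℤ) * M' + (∑ j ∈ T S, w j : ℕ)
          + (if Fin.last n ∈ S then -2 * (K1 : ℤ) else 0) : ℤ) : ℝ) := by
      by_cases hl : Fin.last n ∈ S <;>
        simp only [hl, if_true, if_false] <;> push_cast <;> ring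
    have e2 : 2 * ((T S).card : ℝ) * M' - (∑ j ∈ T S, (w j : ℝ))
          + (if Fin.last n ∈ S then -(K1 : ℝ) - 3 * K2 else 0)
        = ((2 * ((T S).card : ℤ) * M' - (∑ j ∈ T S, w j : ℕ)
          + (if Fin.last n ∈ S then -(K1 : ℤ) - 3 * K2 else 0) : ℤ) : ℝ) := by
      by_cases hl : Fin.last n ∈ S <;>
        simp only [hl, if_true, if_false] <;> push_cast <;> ring
    rw [e1, e2, Int.cast_pos, Int.cast_pos]
  -- facts about T
  have hTmem : ∀ (S : Finset (Fin (n+1))) (j : Fin n), j ∈ T S ↔ j.castSucc ∈ S := by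
    intro S j; simp [hT]
  have hTcard : ∀ S : Finset (Fin (n+1)), Fin.last n ∉ S → (T S).card = S.card := by
    intro S hlS
    have h := erase_last_eq' S
    rw [Finset.erase_eq_of_notMem hlS] at h
    have h2 : ((T S).image Fin.castSucc).card = (T S).card :=
      Finset.card_image_of_injective _ (Fin.castSucc_injective n)
    rw [← h2, ← h]
  have hTcard' : ∀ S : Finset (Fin (n+1)), Fin.last n ∈ S → (T S).card + 1 = S.card := by
    intro S hlS
    have h := erase_last_eq' S
    have h2 : (S.erase (Fin.last n)).card = ((T S).image Fin.castSucc).card := by rw [h]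
    rw [Finset.card_erase_of_mem hlS,
      Finset.card_image_of_injective _ (Fin.castSucc_injective n)] at h2
    have hpos := Finset.card_pos.mpr ⟨_, hlS⟩
    omega
  have hTunion : ∀ S : Finset (Fin (n+1)), T (S ∪ {Fin.last n}) = T S := by
    intro S; ext j
    simp [hT, Finset.mem_union, (Fin.castSucc_lt_last j).ne]
  have hTuniv : T Finset.univ = Finset.univ := by
    ext j; simp [hT]
  -- integer cast facts
  have hMWZ : (M:ℤ) + 8 ≤ W := by exact_mod_cast hMW
  have hWM'Z : (W:ℤ) + 8 ≤ M' := by exact_mod_cast hWM'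
  have hM8Z : (8:ℤ) ≤ M := by exact_mod_cast hM8'
  -- the full election is won by c
  have hfull : scoringRule α (∑ i, G i) = {c} := by
    refine (hwinZ Finset.univ).mpr ?_
    rw [hTuniv]
    simp only [Finset.mem_univ, if_true, Finset.card_univ, Fintype.card_fin]
    have hWZ : ((∑ j : Fin n, w j : ℕ) : ℤ) = (W:ℤ) := by rw [hWdef]
    have h1 : (2*(k:ℤ)+1) * M' ≤ (n:ℤ) * M' := by
      refine mul_le_mul_of_nonneg_right ?_ (by positivity)
      exact_mod_cast h2k
    constructor
    · rw [hWZ]; linarith [hK1Z, hK2Z, hkmZ, hkmgeZ, hMWZ, hWM'Z, hM8Z, h1]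
    · rw [hWZ]; linarith [hK1Z, hK2Z, hkmZ, hkmgeZ, hMWZ, hWM'Z, hM8Z, h1]
  -- impossibility when the last group is present with fewer than k low groups
  have hBlow : ∀ (S : Finset (Fin (n+1))), (T S).card + 1 ≤ k →
      ¬ ((0:ℤ) < 2 * ((T S).card : ℤ) * M' - (∑ j ∈ T S, w j : ℕ)
          + (-(K1:ℤ) - 3 * K2)) := by
    intro S hjk hB
    have hj1 : ((T S).card : ℤ) + 1 ≤ k := by exact_mod_cast hjk
    have hprod : (((T S).card:ℤ) + 1) * M' ≤ (k:ℤ) * M' :=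
      mul_le_mul_of_nonneg_right hj1 (by positivity)
    have hWs0 : (0:ℤ) ≤ ((∑ j ∈ T S, w j : ℕ) : ℤ) := Int.ofNat_nonneg _
    linarith [hprod, hK1Z, hK2Z, hkmZ, hkmgeZ, hMWZ, hWM'Z, hM8Z, hWs0]
  have hcardbound : ∀ X : Finset (Fin (n+1)), X.card ≤ n + 1 := by
    intro X
    have := Finset.card_le_univ X
    simpa using this
  have hcompl : ∀ X : Finset (Fin (n+1)), Finset.univ \ (Finset.univ \ X) = X := by
    intro X
    rw [Finset.sdiff_sdiff_self_left, Finset.univ_inter]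
  unfold DefenseYes
  constructor
  · rintro ⟨I, hIcard, hIprop⟩
    have hlastI : Fin.last n ∉ I := by
      intro hl
      have h1 := hIprop (Finset.univ \ I) Finset.disjoint_sdiff (hcardbound _)
      rw [hcompl, hfull] at h1
      obtain ⟨_, hB⟩ := (hwinZ I).1 h1
      rw [if_pos hl] at hB
      have hjc := hTcard' I hl
      exact hBlow I (by omega) hB
    have hdisj2 : Disjoint I (Finset.univ \ (I ∪ {Fin.last n})) := by
      refine Finset.disjoint_left.mpr ?_
      intro x hx
      simp [Finset.mem_sdiff, Finset.mem_union, hx]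
    have h2 := hIprop (Finset.univ \ (I ∪ {Fin.last n})) hdisj2 (hcardbound _)
    rw [hcompl, hfull] at h2
    obtain ⟨hA, hB⟩ := (hwinZ _).1 h2
    have hlmem : Fin.last n ∈ I ∪ {Fin.last n} :=
      Finset.mem_union_right _ (Finset.mem_singleton_self _)
    rw [hTunion, if_pos hlmem] at hA
    rw [hTunion, if_pos hlmem] at hB
    have hjk : (T I).card = k := by
      by_contra hne
      have hle : (T I).card + 1 ≤ k := by
        have := hTcard I hlastI
        omega
      exact hBlow I hle hB
    rw [hjk] at hA hB
    have hWs8 : 8 ∣ ∑ j ∈ T I, w j := Finset.dvd_sum (fun i _ => hw8 i)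
    have h1 : (M:ℤ) < ((∑ j ∈ T I, w j : ℕ) : ℤ) + 6 := by
      linarith [hK1Z, hK2Z, hkmZ]
    have h2 : ((∑ j ∈ T I, w j : ℕ) : ℤ) < (M:ℤ) + 6 := by
      linarith [hK1Z, hK2Z, hkmZ]
    have hWsM : (∑ j ∈ T I, w j) = M := by omega
    exact ⟨T I, hjk, hWsM⟩
  · rintro ⟨I₀, hI₀card, hI₀sum⟩
    refine ⟨I₀.image Fin.castSucc, ?_, ?_⟩
    · rw [Finset.card_image_of_injective _ (Fin.castSucc_injective n), hI₀card]
    · intro I' hdisj hcard'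
      rw [hfull]
      set S := Finset.univ \ I' with hS
      have hsub : I₀ ⊆ T S := by
        intro j hj
        rw [hTmem]
        have hmem : j.castSucc ∈ I₀.image Fin.castSucc := Finset.mem_image_of_mem _ hj
        have hnotin : j.castSucc ∉ I' := Finset.disjoint_left.mp hdisj hmem
        simp [hS, hnotin]
      have hk' : k ≤ (T S).card := by
        rw [← hI₀card]; exact Finset.card_le_card hsub
      have hWsge : (M:ℤ) ≤ ((∑ j ∈ T S, w j : ℕ) : ℤ) := by
        have : M ≤ ∑ j ∈ T S, w j := by
          rw [← hI₀sum]
          exact Finset.sum_le_sum_of_subset hsub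
        exact_mod_cast this
      have hWsle : ((∑ j ∈ T S, w j : ℕ) : ℤ) ≤ (W:ℤ) := by
        have : (∑ j ∈ T S, w j) ≤ W := by
          rw [hWdef]
          exact Finset.sum_le_sum_of_subset (Finset.subset_univ _)
        exact_mod_cast this
      refine (hwinZ S).mpr ?_
      by_cases hl : Fin.last n ∈ S
      · simp only [if_pos hl]
        by_cases hjeq : (T S).card = k
        · have hTeq : T S = I₀ :=
            (Finset.eq_of_subset_of_card_le hsub (by rw [hjeq, hI₀card])).symm
          rw [hjeq, hTeq, hI₀sum]
          constructor <;> linarith [hK1Z, hK2Z, hkmZ, hM8Z]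
        · have hk1 : (k:ℤ) + 1 ≤ ((T S).card:ℤ) := by
            exact_mod_cast (by omega : k + 1 ≤ (T S).card)
          have hprod : ((k:ℤ)+1) * M' ≤ ((T S).card:ℤ) * M' :=
            mul_le_mul_of_nonneg_right hk1 (by positivity)
          constructor <;> linarith [hprod, hK1Z, hK2Z, hkmZ, hkmgeZ, hMWZ, hWM'Z, hM8Z, hWsge, hWsle]
      · simp only [if_neg hl]
        have hk1 : (1:ℤ) ≤ ((T S).card:ℤ) := by
          exact_mod_cast (by omega : 1 ≤ (T S).card)
        have hprod : (1:ℤ) * M' ≤ ((T S).card:ℤ) * M' :=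
          mul_le_mul_of_nonneg_right hk1 (by positivity)
        constructor <;> linarith [hprod, hMWZ, hWM'Z, hM8Z, hWsge, hWsle]
end
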